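/- Let f : 𝒳 → ℝ be Borel measurable with finite range, and assume Leb(f₊⁻¹({y})) > 0 for every y ∈ 𝒴⁻. Then the spread-out negative weights integrate to the original negative-region integral: ∫_{𝒳ₘ⁺} [ (∫_{f₋⁻¹({f(x)})} ω(v) f(v) dv) / Leb(f₊⁻¹({f(x)})) ] dx = ∫_{𝒳⁻} ω(x) f(x) dx. -/

import Mathlib

open MeasureTheory Set Real

/-- For a finite-range measurable `f` with `Leb(f₊⁻¹({y})) > 0` for every
`y ∈ 𝒴⁻`, the spread-out negative weights integrate to the original
negative-region integral:
`∫_{𝒳ₘ⁺} (∫_{f₋⁻¹({f(x)})} ω f) / Leb(f₊⁻¹({f(x)})) dx = ∫_{𝒳⁻} ω f`. -/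
theorem spread_negative_weights
    (𝒳 : Set ℝ) (h𝒳 : IsCompact 𝒳) (ω f : ℝ → ℝ)
    (hω : ContinuousOn ω 𝒳) (hf : Measurable f)
    (hfin : (f '' 𝒳).Finite)
    (hLeb : ∀ y ∈ f '' {x ∈ 𝒳 | ω x < 0},
      0 < volume (f ⁻¹' {y} ∩ {x ∈ 𝒳 | 0 ≤ ω x})) :
    ∫ x in {x ∈ {x ∈ 𝒳 | 0 ≤ ω x} | ∃ z ∈ {x ∈ 𝒳 | ω x < 0}, f z = f x},
        (∫ v in f ⁻¹' {f x} ∩ {x ∈ 𝒳 | ω x < 0}, ω v * f v)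
          / (volume (f ⁻¹' {f x} ∩ {x ∈ 𝒳 | 0 ≤ ω x})).toReal
      = ∫ x in {x ∈ 𝒳 | ω x < 0}, ω x * f x := by
  classical
  set Xp : Set ℝ := {x ∈ 𝒳 | 0 ≤ ω x} with hXpdef
  set Xn : Set ℝ := {x ∈ 𝒳 | ω x < 0} with hXndef
  -- measurability of Xp and Xn
  have hXcl : IsClosed 𝒳 := h𝒳.isClosed
  have hXpcl : IsClosed Xp := by
    have h1 : Xp = 𝒳 ∩ ω ⁻¹' Ici 0 := by
      ext x; simp [hXpdef, mem_Ici, and_comm]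
    rw [h1]
    exact hω.preimage_isClosed_of_isClosed hXcl isClosed_Ici
  have hXpm : MeasurableSet Xp := hXpcl.measurableSet
  have hXnm : MeasurableSet Xn := by
    have h1 : Xn = 𝒳 \ Xp := by
      ext x
      simp only [hXndef, hXpdef, mem_setOf_eq, mem_diff, not_and, not_le]
      constructor
      · rintro ⟨hx, hlt⟩; exact ⟨hx, fun _ => hlt⟩
      · rintro ⟨hx, h⟩; exact ⟨hx, h hx⟩
    rw [h1]
    exact hXcl.measurableSet.diff hXpm
  have hXnsub : Xn ⊆ 𝒳 := fun x hx => hx.1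
  have hXpsub : Xp ⊆ 𝒳 := fun x hx => hx.1
  -- boundedness of ω and f on 𝒳
  obtain ⟨Cω, hCω⟩ := h𝒳.exists_bound_of_continuousOn hω
  have hfb : (f '' 𝒳).Finite := hfin
  obtain ⟨Cf, hCf⟩ := (isBounded_iff_forall_norm_le).1 hfb.isBounded
  -- integrability of ω * f on Xn
  have hvolX : volume 𝒳 ≠ ⊤ := h𝒳.measure_lt_top.ne
  have haem : AEStronglyMeasurable (fun x => ω x * f x) (volume.restrict Xn) := by
    have hω' : AEMeasurable ω (volume.restrict 𝒳) :=
      hω.aemeasurable hXcl.measurableSet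
    have hω'' : AEMeasurable ω (volume.restrict Xn) :=
      hω'.mono_measure (Measure.restrict_mono hXnsub le_rfl)
    exact (hω''.mul hf.aemeasurable).aestronglyMeasurable
  have hint : IntegrableOn (fun x => ω x * f x) Xn := by
    refine ⟨haem, ?_⟩
    apply HasFiniteIntegral.restrict_of_bounded (C := Cω * Cf)
      (lt_of_le_of_lt (measure_mono hXnsub) h𝒳.measure_lt_top)
    filter_upwards [ae_restrict_mem hXnm] with x hx
    have hx𝒳 : x ∈ 𝒳 := hXnsub hx
    have h1 : ‖ω x‖ ≤ Cω := hCω x hx𝒳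
    have h2 : ‖f x‖ ≤ Cf := hCf _ ⟨x, hx𝒳, rfl⟩
    calc ‖ω x * f x‖ = ‖ω x‖ * ‖f x‖ := norm_mul _ _
      _ ≤ Cω * Cf :=
        mul_le_mul h1 h2 (norm_nonneg _) ((norm_nonneg _).trans h1)
  -- the finite index set
  have hYfin : (f '' Xn).Finite := hfin.subset (image_mono (f := f) hXnsub)
  set YF : Finset ℝ := hYfin.toFinset with hYFdef
  have hYFmem : ∀ y, y ∈ YF ↔ y ∈ f '' Xn := fun y => hYfin.mem_toFinset
  -- pieces
  set A : ℝ → Set ℝ := fun y => f ⁻¹' {y} ∩ Xp with hAdef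
  set B : ℝ → Set ℝ := fun y => f ⁻¹' {y} ∩ Xn with hBdef
  have hAm : ∀ y, MeasurableSet (A y) :=
    fun y => (hf (measurableSet_singleton y)).inter hXpm
  have hBm : ∀ y, MeasurableSet (B y) :=
    fun y => (hf (measurableSet_singleton y)).inter hXnm
  have hAdisj : Set.Pairwise (↑YF) (Function.onFun Disjoint A) := by
    intro y hy z hz hyz
    simp only [Function.onFun, hAdef]
    refine Set.disjoint_left.2 ?_
    rintro x ⟨hxy, _⟩ ⟨hxz, _⟩
    exact hyz (hxy.symm.trans hxz)
  have hBdisj : Set.Pairwise (↑YF) (Function.onFun Disjoint B) := by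
    intro y hy z hz hyz
    simp only [Function.onFun, hBdef]
    refine Set.disjoint_left.2 ?_
    rintro x ⟨hxy, _⟩ ⟨hxz, _⟩
    exact hyz (hxy.symm.trans hxz)
  -- volume facts
  have hAvol_ne_top : ∀ y, volume (A y) ≠ ⊤ := fun y =>
    (lt_of_le_of_lt (measure_mono (fun x hx => hXpsub hx.2)) h𝒳.measure_lt_top).ne
  have hAvol_pos : ∀ y ∈ YF, 0 < volume (A y) := by
    intro y hy
    exact hLeb y ((hYFmem y).1 hy)
  -- decomposition of the LHS domain
  have hdom : {x ∈ Xp | ∃ z ∈ Xn, f z = f x} = ⋃ y ∈ YF, A y := by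
    ext x
    simp only [mem_setOf_eq, mem_iUnion, hAdef, mem_inter_iff, mem_preimage,
      mem_singleton_iff, exists_prop]
    constructor
    · rintro ⟨hxp, z, hz, hfz⟩
      exact ⟨f x, (hYFmem _).2 ⟨z, hz, hfz⟩, rfl, hxp⟩
    · rintro ⟨y, hy, hfx, hxp⟩
      obtain ⟨z, hz, hfz⟩ := (hYFmem y).1 hy
      exact ⟨hxp, z, hz, hfz.trans hfx.symm⟩
  -- decomposition of Xn
  have hXn_dec : Xn = ⋃ y ∈ YF, B y := by
    ext x
    simp only [mem_iUnion, hBdef, mem_inter_iff, mem_preimage, mem_singleton_iff,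
      exists_prop]
    constructor
    · intro hx
      exact ⟨f x, (hYFmem _).2 ⟨x, hx, rfl⟩, rfl, hx⟩
    · rintro ⟨y, _, _, hx⟩
      exact hx
  -- the integrand
  set g : ℝ → ℝ := fun x =>
    (∫ v in f ⁻¹' {f x} ∩ Xn, ω v * f v)
      / (volume (f ⁻¹' {f x} ∩ Xp)).toReal with hgdef
  set c : ℝ → ℝ := fun y =>
    (∫ v in B y, ω v * f v) / (volume (A y)).toReal with hcdef
  have hg_on : ∀ y, ∀ x ∈ A y, g x = c y := by
    intro y x hx
    have hfx : f x = y := hx.1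
    simp only [hgdef, hcdef, hfx, hAdef, hBdef]
  -- integral of g over each A y
  have hgA : ∀ y ∈ YF, ∫ x in A y, g x = ∫ v in B y, ω v * f v := by
    intro y hy
    rw [setIntegral_congr_fun (hAm y) (hg_on y)]
    rw [setIntegral_const]
    rw [smul_eq_mul, hcdef]
    have h0 : (volume (A y)).toReal ≠ 0 :=
      (ENNReal.toReal_pos (hAvol_pos y hy).ne' (hAvol_ne_top y)).ne'
    field_simp
    rw [measureReal_def]; ring
  -- integrability of g on each A y
  have hgint : ∀ y ∈ YF, IntegrableOn g (A y) := by
    intro y hy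
    rw [integrableOn_congr_fun (hg_on y) (hAm y)]
    exact integrableOn_const (hAvol_ne_top y)
  -- integrability of ω*f on each B y
  have hBint : ∀ y ∈ YF, IntegrableOn (fun x => ω x * f x) (B y) :=
    fun y _ => hint.mono_set (fun x hx => hx.2)
  calc ∫ x in {x ∈ Xp | ∃ z ∈ Xn, f z = f x}, g x
      = ∫ x in ⋃ y ∈ YF, A y, g x := by rw [hdom]
    _ = ∑ y ∈ YF, ∫ x in A y, g x :=
        integral_biUnion_finset YF (fun y _ => hAm y) hAdisj hgint
    _ = ∑ y ∈ YF, ∫ v in B y, ω v * f v := Finset.sum_congr rfl hgA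
    _ = ∫ x in ⋃ y ∈ YF, B y, ω x * f x :=
        (integral_biUnion_finset YF (fun y _ => hBm y) hBdisj hBint).symm
    _ = ∫ x in Xn, ω x * f x := by rw [← hXn_dec]
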